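/- Let F be a finite field. Then for every element g of the projective special linear group PSL(2, F) with g ≠ 1, the centralizer Z(g) of g in PSL(2, F) satisfies |Z(g)| · (|F| − 1) ≤ 2 · |PSL(2, F)|, i.e., |Z(g)|/|PSL(2, F)| ≤ 2/(|F| − 1). -/

import Mathlib

open scoped MatrixGroups
open Polynomial

section
variable {F : Type*} [Field F] [Fintype F]

private lemma comm_span {F : Type*} [Field F] (M A : Matrix (Fin 2) (Fin 2) F)
    (hM : ∀ c : F, M ≠ c • (1 : Matrix (Fin 2) (Fin 2) F)) (h : A * M = M * A) :
    ∃ a b : F, A = a • (1 : Matrix (Fin 2) (Fin 2) F) + b • M := by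
  have e00 := congrFun (congrFun h 0) 0
  have e01 := congrFun (congrFun h 0) 1
  have e10 := congrFun (congrFun h 1) 0
  have e11 := congrFun (congrFun h 1) 1
  simp only [Matrix.mul_apply, Fin.sum_univ_two] at e00 e01 e10 e11
  by_cases h10 : M 1 0 ≠ 0
  · refine ⟨A 0 0 - (A 1 0 / M 1 0) * M 0 0, A 1 0 / M 1 0, ?_⟩
    ext i j
    fin_cases i <;> fin_cases j <;>
      simp only [Matrix.add_apply, Matrix.smul_apply, Matrix.one_apply_eq,
        Matrix.one_apply_ne, Fin.zero_eta, Fin.mk_one, ne_eq, smul_eq_mul, zero_ne_one,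
        not_false_eq_true, one_ne_zero, mul_zero, mul_one] <;>
      field_simp <;>
      first
        | ring1
        | linear_combination e00 | linear_combination -e00
        | linear_combination e01 | linear_combination -e01
        | linear_combination e10 | linear_combination -e10
        | linear_combination e11 | linear_combination -e11
  · push_neg at h10
    by_cases h01 : M 0 1 ≠ 0
    · refine ⟨A 0 0 - (A 0 1 / M 0 1) * M 0 0, A 0 1 / M 0 1, ?_⟩
      ext i j
      fin_cases i <;> fin_cases j <;>
        simp only [Matrix.add_apply, Matrix.smul_apply, Matrix.one_apply_eq,
          Matrix.one_apply_ne, Fin.zero_eta, Fin.mk_one, ne_eq, smul_eq_mul, zero_ne_one,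
          not_false_eq_true, one_ne_zero, mul_zero, mul_one] <;>
        field_simp <;>
        first
          | ring1
          | linear_combination e00 | linear_combination -e00
          | linear_combination e01 | linear_combination -e01
          | linear_combination e10 | linear_combination -e10
          | linear_combination e11 | linear_combination -e11
    · push_neg at h01
      have hd : M 0 0 ≠ M 1 1 := by
        intro hdd
        apply hM (M 0 0)
        ext i j
        fin_cases i <;> fin_cases j <;> simp [h10, h01, hdd, Matrix.one_apply]
      have hsub : M 0 0 - M 1 1 ≠ 0 := sub_ne_zero.mpr hd
      refine ⟨A 0 0 - ((A 0 0 - A 1 1) / (M 0 0 - M 1 1)) * M 0 0,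
        (A 0 0 - A 1 1) / (M 0 0 - M 1 1), ?_⟩
      ext i j
      fin_cases i <;> fin_cases j <;>
        simp only [Matrix.add_apply, Matrix.smul_apply, Matrix.one_apply_eq,
          Matrix.one_apply_ne, Fin.zero_eta, Fin.mk_one, ne_eq, smul_eq_mul, zero_ne_one,
          not_false_eq_true, one_ne_zero, mul_zero, mul_one] <;>
        field_simp <;>
        first
          | ring1
          | linear_combination e00 | linear_combination -e00
          | linear_combination e01 | linear_combination -e01
          | linear_combination e10 | linear_combination -e10
          | linear_combination e11 | linear_combination -e11

lemma quad_card_le (t : F) :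
    Nat.card {p : F × F // p.1 ^ 2 + t * p.1 * p.2 + p.2 ^ 2 = 1} ≤ 2 * Fintype.card F := by
  classical
  have hsub : (Finset.univ.filter fun p : F × F => p.1 ^ 2 + t * p.1 * p.2 + p.2 ^ 2 = 1)
      ⊆ Finset.univ.biUnion fun b : F =>
        ((X ^ 2 + (C (t * b) * X + C (b ^ 2 - 1)) : F[X]).roots.toFinset.image
          fun a => (a, b)) := by
    intro p hp
    simp only [Finset.mem_filter, Finset.mem_univ, true_and] at hp
    simp only [Finset.mem_biUnion, Finset.mem_univ, true_and, Finset.mem_image,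
      Multiset.mem_toFinset]
    refine ⟨p.2, p.1, ?_, rfl⟩
    rw [mem_roots']
    constructor
    · exact (Polynomial.monic_X_pow_add (n := 2)
        (lt_of_le_of_lt Polynomial.degree_linear_le (by norm_num))).ne_zero
    · simp only [IsRoot, eval_add, eval_pow, eval_X, eval_mul, eval_C]
      linear_combination hp
  have hcard : (Finset.univ.filter fun p : F × F =>
      p.1 ^ 2 + t * p.1 * p.2 + p.2 ^ 2 = 1).card ≤ 2 * Fintype.card F := by
    refine le_trans (Finset.card_le_card hsub) (le_trans (Finset.card_biUnion_le) ?_)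
    have hb : ∀ b : F,
        ((X ^ 2 + (C (t * b) * X + C (b ^ 2 - 1)) : F[X]).roots.toFinset.image
          fun a => (a, b)).card ≤ 2 := by
      intro b
      refine le_trans (Finset.card_image_le) (le_trans (Multiset.toFinset_card_le _) ?_)
      refine le_trans (Polynomial.card_roots' _) ?_
      compute_degree
    calc (Finset.univ : Finset F).sum (fun b =>
          ((X ^ 2 + (C (t * b) * X + C (b ^ 2 - 1)) : F[X]).roots.toFinset.image
            fun a => (a, b)).card)
        ≤ (Finset.univ : Finset F).sum (fun _ => 2) := Finset.sum_le_sum fun b _ => hb b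
      _ = 2 * Fintype.card F := by simp [Finset.sum_const, mul_comm]
  rw [Nat.card_eq_fintype_card]
  calc Fintype.card {p : F × F // p.1 ^ 2 + t * p.1 * p.2 + p.2 ^ 2 = 1}
      = (Finset.univ.filter fun p : F × F =>
          p.1 ^ 2 + t * p.1 * p.2 + p.2 ^ 2 = 1).card := by
        rw [Fintype.card_subtype]
    _ ≤ 2 * Fintype.card F := hcard

lemma centralizer_card_le (S : SL(2, F)) (hS : S ∉ Subgroup.center (SL(2, F))) :
    Nat.card (Subgroup.centralizer ({S} : Set (SL(2, F)))) ≤ 2 * Fintype.card F := by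
  classical
  have hns : ∀ c : F, (S : Matrix (Fin 2) (Fin 2) F) ≠ c • 1 := by
    intro c hc
    apply hS
    rw [Matrix.SpecialLinearGroup.mem_center_iff]
    refine ⟨c, ?_, ?_⟩
    · have hdet : Matrix.det ((S : Matrix (Fin 2) (Fin 2) F)) = 1 := S.2
      rw [hc] at hdet
      simpa [Matrix.det_smul] using hdet
    · have : (Matrix.scalar (Fin 2)) c = c • (1 : Matrix (Fin 2) (Fin 2) F) := by
        ext i j; simp [Matrix.scalar_apply, Matrix.one_apply, Matrix.diagonal_apply]
      rw [this, ← hc]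
  set t : F := (S : Matrix (Fin 2) (Fin 2) F) 0 0 + (S : Matrix (Fin 2) (Fin 2) F) 1 1 with ht
  set C := Subgroup.centralizer ({S} : Set (SL(2, F)))
  have hcomm : ∀ T : C, (T : SL(2, F)).val * (S : Matrix (Fin 2) (Fin 2) F)
      = (S : Matrix (Fin 2) (Fin 2) F) * (T : SL(2, F)).val := by
    intro T
    have := Subgroup.mem_centralizer_iff.mp T.2 S (by simp)
    have := congrArg (Subtype.val) this
    simpa using this.symm
  -- choose coefficients
  have hex : ∀ T : C, ∃ a b : F, (T : SL(2, F)).val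
      = a • (1 : Matrix (Fin 2) (Fin 2) F) + b • (S : Matrix (Fin 2) (Fin 2) F) :=
    fun T => comm_span _ _ hns (hcomm T)
  choose fa fb hfab using hex
  have hquad : ∀ T : C, (fa T) ^ 2 + t * (fa T) * (fb T) + (fb T) ^ 2 = 1 := by
    intro T
    have hdet : Matrix.det ((T : SL(2, F)).val) = 1 := (T : SL(2, F)).2
    have hdetS : Matrix.det ((S : Matrix (Fin 2) (Fin 2) F)) = 1 := S.2
    rw [hfab T] at hdet
    rw [Matrix.det_fin_two] at hdet hdetS
    simp only [Matrix.add_apply, Matrix.smul_apply, Matrix.one_apply_eq, Matrix.one_apply_ne,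
      smul_eq_mul, ne_eq, zero_ne_one, not_false_eq_true, one_ne_zero, mul_zero, mul_one] at hdet
    rw [ht]
    linear_combination hdet - (fb T)^2 * hdetS
  let j : C → {p : F × F // p.1 ^ 2 + t * p.1 * p.2 + p.2 ^ 2 = 1} :=
    fun T => ⟨(fa T, fb T), hquad T⟩
  have hinj : Function.Injective j := by
    intro T T' hTT'
    have h1 : fa T = fa T' := congrArg (fun p => p.1.1) hTT'
    have h2 : fb T = fb T' := congrArg (fun p => p.1.2) hTT'
    have : (T : SL(2, F)).val = (T' : SL(2, F)).val := by
      rw [hfab T, hfab T', h1, h2]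
    exact Subtype.ext (Subtype.ext this)
  exact le_trans (Nat.card_le_card_of_injective j hinj) (quad_card_le t)

lemma sq_one_card_le : Nat.card {x : F // x ^ 2 = 1} ≤ 2 := by
  classical
  have hsub : (Finset.univ.filter fun x : F => x ^ 2 = 1) ⊆ ({1, -1} : Finset F) := by
    intro x hx
    simp only [Finset.mem_filter, Finset.mem_univ, true_and] at hx
    have hfac : (x - 1) * (x + 1) = 0 := by linear_combination hx
    simp only [Finset.mem_insert, Finset.mem_singleton]
    rcases mul_eq_zero.mp hfac with h | h
    · exact Or.inl (sub_eq_zero.mp h)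
    · exact Or.inr (eq_neg_of_add_eq_zero_left h)
  calc Nat.card {x : F // x ^ 2 = 1}
      = (Finset.univ.filter fun x : F => x ^ 2 = 1).card := by
        rw [Nat.card_eq_fintype_card, Fintype.card_subtype]
    _ ≤ ({1, -1} : Finset F).card := Finset.card_le_card hsub
    _ ≤ 2 := le_trans (Finset.card_insert_le _ _) (by simp)

lemma center_card_le : Nat.card (Subgroup.center (SL(2, F))) ≤ 2 := by
  classical
  have hmap : ∀ A : Subgroup.center (SL(2, F)),
      ((A : SL(2, F)) : Matrix (Fin 2) (Fin 2) F) 0 0 ^ 2 = 1 := by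
    intro A
    obtain ⟨r, hr, hrA⟩ := Matrix.SpecialLinearGroup.mem_center_iff.mp A.2
    have h00 : ((A : SL(2, F)) : Matrix (Fin 2) (Fin 2) F) 0 0 = r := by
      rw [← hrA]; simp [Matrix.scalar_apply]
    rw [h00]
    simpa using hr
  let j : Subgroup.center (SL(2, F)) → {x : F // x ^ 2 = 1} :=
    fun A => ⟨((A : SL(2, F)) : Matrix (Fin 2) (Fin 2) F) 0 0, hmap A⟩
  have hinj : Function.Injective j := by
    intro A B hAB
    have h : ((A : SL(2, F)) : Matrix (Fin 2) (Fin 2) F) 0 0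
        = ((B : SL(2, F)) : Matrix (Fin 2) (Fin 2) F) 0 0 := congrArg Subtype.val hAB
    have hA := Matrix.SpecialLinearGroup.scalar_eq_coe_self_center A 0
    have hB := Matrix.SpecialLinearGroup.scalar_eq_coe_self_center B 0
    apply Subtype.ext
    apply Subtype.ext
    rw [← hA, ← hB, h]
  exact le_trans (Nat.card_le_card_of_injective j hinj) sq_one_card_le

lemma sl_card_ge :
    Fintype.card F * Fintype.card F + Fintype.card F * (Fintype.card F - 1)
      ≤ Nat.card (SL(2, F)) := by
  classical
  let f : (F × F) ⊕ (Fˣ × F) → SL(2, F) := fun x =>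
    match x with
    | Sum.inl (a, d) => ⟨!![a, a * d - 1; 1, d], by simp [Matrix.det_fin_two_of]⟩
    | Sum.inr (u, b) => ⟨!![(u : F), b; 0, (u⁻¹ : Fˣ)], by
        simp [Matrix.det_fin_two_of]⟩
  have hinj : Function.Injective f := by
    rintro (⟨a, d⟩ | ⟨u, b⟩) (⟨a', d'⟩ | ⟨u', b'⟩) h <;>
      replace h := fun i j => (Matrix.SpecialLinearGroup.ext_iff _ _).mp h i j
    · have h00 := h 0 0
      have h11 := h 1 1
      simp [f] at h00 h11
      simp [h00, h11]
    · have h10 := h 1 0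
      simp [f] at h10
    · have h10 := h 1 0
      simp [f] at h10
    · have h00 := h 0 0
      have h01 := h 0 1
      simp [f] at h00 h01
      simp [Units.ext h00, h01]
  have := Nat.card_le_card_of_injective f hinj
  calc Fintype.card F * Fintype.card F + Fintype.card F * (Fintype.card F - 1)
      = Nat.card ((F × F) ⊕ (Fˣ × F)) := by
        rw [Nat.card_sum, Nat.card_prod, Nat.card_prod]
        simp [Nat.card_eq_fintype_card, Fintype.card_units, mul_comm]
    _ ≤ Nat.card (SL(2, F)) := this

end

/-- For a finite field `F` and `g ≠ 1` in `PSL(2, F)`, the centralizer of `g`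
satisfies `|Z(g)| · (|F| − 1) ≤ 2 · |PSL(2, F)|`. -/
theorem psl_two_centralizer_bound (F : Type*) [Field F] [Fintype F]
    (g : Matrix.ProjectiveSpecialLinearGroup (Fin 2) F) (hg : g ≠ 1) :
    Nat.card (Subgroup.centralizer ({g} : Set (Matrix.ProjectiveSpecialLinearGroup (Fin 2) F)))
        * (Fintype.card F - 1) ≤
      2 * Nat.card (Matrix.ProjectiveSpecialLinearGroup (Fin 2) F) := by
  classical
  set K : Subgroup (SL(2, F)) := Subgroup.center (SL(2, F)) with hK
  obtain ⟨S, hSg⟩ := QuotientGroup.mk'_surjective K g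
  have hSc : S ∉ K := by
    intro h
    exact hg (by rw [← hSg]; exact (QuotientGroup.eq_one_iff S).mpr h)
  set Z : Subgroup (PSL(2, F)) :=
    Subgroup.centralizer ({g} : Set (PSL(2, F))) with hZ
  set H : Subgroup (SL(2, F)) := Z.comap (QuotientGroup.mk' K) with hH
  set Cs : Subgroup (SL(2, F)) := Subgroup.centralizer ({S} : Set (SL(2, F))) with hCs
  -- membership characterization of H
  have hHmem : ∀ h : SL(2, F), h ∈ H → h⁻¹ * S⁻¹ * h * S ∈ K := by
    intro h hh
    have h1 : g * (QuotientGroup.mk' K) h = (QuotientGroup.mk' K) h * g :=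
      Subgroup.mem_centralizer_iff.mp hh g (Set.mem_singleton g)
    rw [← hSg, ← map_mul, ← map_mul] at h1
    have h2 : (S * h)⁻¹ * (h * S) ∈ K := QuotientGroup.eq.mp h1
    simpa [mul_inv_rev, mul_assoc] using h2
  -- the commutator homomorphism H →* K
  let φ : H →* K :=
    { toFun := fun h => ⟨(h : SL(2, F))⁻¹ * S⁻¹ * h * S, hHmem _ h.2⟩
      map_one' := by
        apply Subtype.ext
        simp
      map_mul' := by
        intro h₁ h₂
        apply Subtype.ext
        show ((h₁ : SL(2, F)) * h₂)⁻¹ * S⁻¹ * ((h₁ : SL(2, F)) * h₂) * S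
          = ((h₁ : SL(2, F))⁻¹ * S⁻¹ * h₁ * S) * ((h₂ : SL(2, F))⁻¹ * S⁻¹ * h₂ * S)
        have hz := Subgroup.mem_center_iff.mp (hHmem _ h₁.2)
        calc ((h₁ : SL(2, F)) * h₂)⁻¹ * S⁻¹ * ((h₁ : SL(2, F)) * h₂) * S
            = ((h₂ : SL(2, F))⁻¹ * ((h₁ : SL(2, F))⁻¹ * S⁻¹ * h₁ * S))
              * (S⁻¹ * ((h₂ : SL(2, F)) * S)) := by group
          _ = (((h₁ : SL(2, F))⁻¹ * S⁻¹ * h₁ * S) * (h₂ : SL(2, F))⁻¹)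
              * (S⁻¹ * ((h₂ : SL(2, F)) * S)) := by rw [hz]
          _ = ((h₁ : SL(2, F))⁻¹ * S⁻¹ * h₁ * S) * ((h₂ : SL(2, F))⁻¹ * S⁻¹ * h₂ * S) := by
              group }
  have hker : φ.ker = Cs.subgroupOf H := by
    ext h
    rw [MonoidHom.mem_ker, Subgroup.mem_subgroupOf]
    constructor
    · intro hh
      have hval : (h : SL(2, F))⁻¹ * S⁻¹ * h * S = 1 := congrArg Subtype.val hh
      rw [Subgroup.mem_centralizer_iff]
      intro x hx
      rw [Set.mem_singleton_iff] at hx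
      rw [hx]
      have key : (S * (h : SL(2, F))) * ((h : SL(2, F))⁻¹ * S⁻¹ * h * S)
          = (h : SL(2, F)) * S := by group
      rw [hval, mul_one] at key
      exact key
    · intro hh
      have hc : S * (h : SL(2, F)) = (h : SL(2, F)) * S :=
        Subgroup.mem_centralizer_iff.mp hh S (Set.mem_singleton S)
      apply Subtype.ext
      show (h : SL(2, F))⁻¹ * S⁻¹ * h * S = 1
      calc (h : SL(2, F))⁻¹ * S⁻¹ * h * S
          = (h : SL(2, F))⁻¹ * S⁻¹ * (S * h) := by rw [hc]; group
        _ = 1 := by group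
  have hCH : Cs ≤ H := by
    intro T hT
    have hc : S * T = T * S := Subgroup.mem_centralizer_iff.mp hT S (Set.mem_singleton S)
    show (QuotientGroup.mk' K) T ∈ Z
    rw [Subgroup.mem_centralizer_iff]
    intro x hx
    rw [Set.mem_singleton_iff] at hx
    rw [hx, ← hSg, ← map_mul, ← map_mul, hc]
  have hKH : K ≤ H := by
    intro k hk
    show (QuotientGroup.mk' K) k ∈ Z
    have h1 : (QuotientGroup.mk' K) k = 1 := (QuotientGroup.eq_one_iff k).mpr hk
    rw [h1]
    exact Z.one_mem
  -- cardinality of H via φ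
  have e1 : Nat.card H = Nat.card (H ⧸ φ.ker) * Nat.card φ.ker :=
    Subgroup.card_eq_card_quotient_mul_card_subgroup φ.ker
  have e2 : Nat.card (H ⧸ φ.ker) = Nat.card φ.range :=
    Nat.card_congr (QuotientGroup.quotientKerEquivRange φ).toEquiv
  have e3 : Nat.card φ.range ≤ Nat.card K :=
    Nat.card_le_card_of_injective _ φ.range.subtype_injective
  have e4 : Nat.card φ.ker = Nat.card Cs := by
    rw [hker]
    exact Nat.card_congr (Subgroup.subgroupOfEquivOfLe hCH).toEquiv
  -- cardinality of H via ψ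
  let ψ : H →* PSL(2, F) := (QuotientGroup.mk' K).comp H.subtype
  have e5 : Nat.card H = Nat.card (H ⧸ ψ.ker) * Nat.card ψ.ker :=
    Subgroup.card_eq_card_quotient_mul_card_subgroup ψ.ker
  have e6 : Nat.card (H ⧸ ψ.ker) = Nat.card ψ.range :=
    Nat.card_congr (QuotientGroup.quotientKerEquivRange ψ).toEquiv
  have e7 : ψ.range = Z := by
    rw [MonoidHom.range_comp, Subgroup.range_subtype]
    exact Subgroup.map_comap_eq_self_of_surjective (QuotientGroup.mk'_surjective K) Z
  have e8 : Nat.card ψ.ker = Nat.card K := by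
    have : ψ.ker = K.subgroupOf H := by
      ext h
      rw [MonoidHom.mem_ker, Subgroup.mem_subgroupOf]
      show (QuotientGroup.mk' K) (h : SL(2, F)) = 1 ↔ _
      exact QuotientGroup.eq_one_iff _
    rw [this]
    exact Nat.card_congr (Subgroup.subgroupOfEquivOfLe hKH).toEquiv
  have e9 : Nat.card (SL(2, F)) = Nat.card (PSL(2, F)) * Nat.card K :=
    Subgroup.card_eq_card_quotient_mul_card_subgroup K
  -- numeric bounds
  set q := Fintype.card F with hq
  have hdK1 : 1 ≤ Nat.card K := Nat.one_le_iff_ne_zero.mpr (Nat.card_pos).ne'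
  have hdK2 : Nat.card K ≤ 2 := center_card_le
  have hC : Nat.card Cs ≤ 2 * q := centralizer_card_le S hSc
  have hSL : q * q + q * (q - 1) ≤ Nat.card (SL(2, F)) := sl_card_ge
  -- step 1 : Nat.card Z ≤ 2 * q
  have hZle : Nat.card Z ≤ 2 * q := by
    have hH1 : Nat.card H ≤ Nat.card K * (2 * q) := by
      rw [e1, e2]
      exact Nat.mul_le_mul e3 (e4 ▸ hC)
    have hH2 : Nat.card H = Nat.card Z * Nat.card K := by
      rw [e5, e6, e7, e8]
    rw [hH2] at hH1
    have : Nat.card Z * Nat.card K ≤ (2 * q) * Nat.card K := by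
      calc Nat.card Z * Nat.card K ≤ Nat.card K * (2 * q) := hH1
        _ = (2 * q) * Nat.card K := by ring
    exact Nat.le_of_mul_le_mul_right this (lt_of_lt_of_le Nat.zero_lt_one hdK1)
  -- step 2 : q * (q - 1) ≤ Nat.card PSL
  have hPSL : q * (q - 1) ≤ Nat.card (PSL(2, F)) := by
    have h1 : 2 * (q * (q - 1)) ≤ Nat.card (SL(2, F)) := by
      calc 2 * (q * (q - 1)) = q * (q - 1) + q * (q - 1) := by ring
        _ ≤ q * q + q * (q - 1) :=
          Nat.add_le_add_right (Nat.mul_le_mul_left q (Nat.sub_le q 1)) _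
        _ ≤ Nat.card (SL(2, F)) := hSL
    have h2 : Nat.card (SL(2, F)) ≤ Nat.card (PSL(2, F)) * 2 := by
      rw [e9]
      exact Nat.mul_le_mul_left _ hdK2
    have : 2 * (q * (q - 1)) ≤ 2 * Nat.card (PSL(2, F)) := by
      calc 2 * (q * (q - 1)) ≤ Nat.card (PSL(2, F)) * 2 := le_trans h1 h2
        _ = 2 * Nat.card (PSL(2, F)) := by ring
    exact Nat.le_of_mul_le_mul_left this Nat.zero_lt_two
  calc Nat.card Z * (q - 1) ≤ (2 * q) * (q - 1) := Nat.mul_le_mul_right _ hZle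
    _ = 2 * (q * (q - 1)) := by ring
    _ ≤ 2 * Nat.card (PSL(2, F)) := Nat.mul_le_mul_left _ hPSL
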